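/- Let f₁, …, f_m : ℝ → ℝ be square-integrable on (0,1) with means μ_i = ∫₀¹ f_i and centered versions f_i^c = f_i − μ_i, and let λ₁ > 0 and λ₂ > 0 be fixed weights for the mean and dispersion components. Let g(t) = (1/m) Σ_{i=1}^m f_i(t), with mean μ_g and centered version g^c = g − μ_g. Then for every square-integrable h on (0,1) with mean μ_h and centered version h^c, Σ_{i=1}^m [ λ₁ (μ_i − μ_g)² + λ₂ ∫₀¹ (f_i^c(t) − g^c(t))² dt ] ≤ Σ_{i=1}^m [ λ₁ (μ_i − μ_h)² + λ₂ ∫₀¹ (f_i^c(t) − h^c(t))² dt ]; that is, the pointwise-mean barycenter also minimizes the two-component adaptive Wasserstein criterion for any positive component weights. -/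

import Mathlib

open MeasureTheory Finset

/-- The mean minimizes the sum of squared deviations. -/
lemma sum_sq_mean_le_aux (m : ℕ) (a : Fin m → ℝ) (c : ℝ) :
    ∑ i : Fin m, (a i - (1 / (m : ℝ)) * ∑ j : Fin m, a j) ^ 2 ≤
      ∑ i : Fin m, (a i - c) ^ 2 := by
  rcases Nat.eq_zero_or_pos m with hm | hm
  · subst hm; simp
  have hm' : (m : ℝ) ≠ 0 := by positivity
  set μ : ℝ := (1 / (m : ℝ)) * ∑ j : Fin m, a j with hμ
  have hsum : ∑ j : Fin m, a j = (m : ℝ) * μ := by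
    rw [hμ]; field_simp
  have expand : ∑ i : Fin m, (a i - c) ^ 2 - ∑ i : Fin m, (a i - μ) ^ 2
      = (m : ℝ) * (μ - c) ^ 2 := by
    rw [← Finset.sum_sub_distrib]
    have h1 : ∀ i : Fin m, (a i - c) ^ 2 - (a i - μ) ^ 2
        = (μ - c) * (2 * a i - c - μ) := fun i => by ring
    simp_rw [h1]
    rw [← Finset.mul_sum]
    have h2 : ∑ i : Fin m, (2 * a i - c - μ)
        = 2 * ((m : ℝ) * μ) - (m : ℝ) * c - (m : ℝ) * μ := by
      rw [Finset.sum_sub_distrib, Finset.sum_sub_distrib, ← Finset.mul_sum,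
        hsum, Finset.sum_const, Finset.card_fin, nsmul_eq_mul,
        Finset.sum_const, Finset.card_fin, nsmul_eq_mul]
    rw [h2]; ring
  nlinarith [sq_nonneg (μ - c), Nat.cast_nonneg (α := ℝ) m,
    mul_nonneg (Nat.cast_nonneg (α := ℝ) m) (sq_nonneg (μ - c))]

/-- The pointwise-mean barycenter also minimizes the two-component adaptive
Wasserstein criterion `Σᵢ [λ₁ (μᵢ − μ_g)² + λ₂ ∫ (fᵢᶜ − gᶜ)²]` for any fixed
positive component weights `λ₁, λ₂`. -/
theorem barycenter_minimizes_adaptive_criterion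
    (m : ℕ) (f : Fin m → ℝ → ℝ)
    (hf : ∀ i, MemLp (f i) 2 (volume.restrict (Set.Ioo (0:ℝ) 1)))
    (lam₁ lam₂ : ℝ) (hlam₁ : 0 < lam₁) (hlam₂ : 0 < lam₂)
    (g : ℝ → ℝ) (hgdef : ∀ t, g t = (1 / (m : ℝ)) * ∑ i : Fin m, f i t)
    (h : ℝ → ℝ) (hh : MemLp h 2 (volume.restrict (Set.Ioo (0:ℝ) 1))) :
    (∑ i : Fin m,
        (lam₁ * ((∫ t in Set.Ioo (0:ℝ) 1, f i t) -
            ∫ t in Set.Ioo (0:ℝ) 1, g t) ^ 2 +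
          lam₂ * ∫ t in Set.Ioo (0:ℝ) 1,
            ((f i t - ∫ s in Set.Ioo (0:ℝ) 1, f i s) -
              (g t - ∫ s in Set.Ioo (0:ℝ) 1, g s)) ^ 2)) ≤
      ∑ i : Fin m,
        (lam₁ * ((∫ t in Set.Ioo (0:ℝ) 1, f i t) -
            ∫ t in Set.Ioo (0:ℝ) 1, h t) ^ 2 +
          lam₂ * ∫ t in Set.Ioo (0:ℝ) 1,
            ((f i t - ∫ s in Set.Ioo (0:ℝ) 1, f i s) -
              (h t - ∫ s in Set.Ioo (0:ℝ) 1, h s)) ^ 2) := by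
  set ν := volume.restrict (Set.Ioo (0:ℝ) 1) with hν
  haveI : IsFiniteMeasure ν := by
    rw [hν]
    exact ⟨by simp [Real.volume_Ioo]⟩
  -- means
  set μF : Fin m → ℝ := fun i => ∫ t in Set.Ioo (0:ℝ) 1, f i t with hμF
  set μg : ℝ := ∫ t in Set.Ioo (0:ℝ) 1, g t with hμg
  set μh : ℝ := ∫ t in Set.Ioo (0:ℝ) 1, h t with hμh
  have hgfun : g = fun t => (1 / (m : ℝ)) * ∑ i : Fin m, f i t := funext hgdef
  have hgmem : MemLp g 2 ν := by
    rw [hgfun]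
    have hs : MemLp (fun t => ∑ i : Fin m, f i t) 2 ν := by
      have h0 := memLp_finset_sum' (μ := ν) (p := 2) Finset.univ
        (f := f) (fun i _ => hf i)
      have he : (∑ i : Fin m, f i) = fun t => ∑ i : Fin m, f i t := by
        funext t; simp
      rwa [he] at h0
    exact hs.const_mul _
  have hint_f : ∀ i, Integrable (f i) ν := fun i => (hf i).integrable one_le_two
  have hμg_eq : μg = (1 / (m : ℝ)) * ∑ i : Fin m, μF i := by
    rw [hμg, hgfun]
    rw [show (∫ t in Set.Ioo (0:ℝ) 1, (1 / (m : ℝ)) * ∑ i : Fin m, f i t)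
        = (1 / (m : ℝ)) * ∫ t in Set.Ioo (0:ℝ) 1, ∑ i : Fin m, f i t from
      MeasureTheory.integral_const_mul _ _]
    rw [MeasureTheory.integral_finset_sum _ (fun i _ => hint_f i)]
  -- centered versions
  set Fc : Fin m → ℝ → ℝ := fun i t => f i t - μF i with hFc
  set Gc : ℝ → ℝ := fun t => g t - μg with hGc
  set Hc : ℝ → ℝ := fun t => h t - μh with hHc
  have hFc_mem : ∀ i, MemLp (Fc i) 2 ν := fun i => by
    have := (hf i).sub (memLp_const (μ := ν) (p := 2) (μF i))
    exact this
  have hGc_mem : MemLp Gc 2 ν := by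
    have := hgmem.sub (memLp_const (μ := ν) (p := 2) μg)
    exact this
  have hHc_mem : MemLp Hc 2 ν := by
    have := hh.sub (memLp_const (μ := ν) (p := 2) μh)
    exact this
  have hGc_eq : ∀ t, Gc t = (1 / (m : ℝ)) * ∑ i : Fin m, Fc i t := by
    intro t
    simp only [Gc, Fc, hgdef t, hμg_eq]
    rw [Finset.sum_sub_distrib, mul_sub]
  -- integrable squares
  have hsqG : ∀ i : Fin m, Integrable (fun t => (Fc i t - Gc t) ^ 2) ν := by
    intro i
    have := ((hFc_mem i).sub hGc_mem).integrable_sq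
    simpa [Pi.sub_apply] using this
  have hsqH : ∀ i : Fin m, Integrable (fun t => (Fc i t - Hc t) ^ 2) ν := by
    intro i
    have := ((hFc_mem i).sub hHc_mem).integrable_sq
    simpa [Pi.sub_apply] using this
  -- mean component
  have hmean : ∑ i : Fin m, (μF i - μg) ^ 2 ≤ ∑ i : Fin m, (μF i - μh) ^ 2 := by
    rw [hμg_eq]
    exact sum_sq_mean_le_aux m μF μh
  -- dispersion component
  have hdisp : ∑ i : Fin m, ∫ t in Set.Ioo (0:ℝ) 1, (Fc i t - Gc t) ^ 2
      ≤ ∑ i : Fin m, ∫ t in Set.Ioo (0:ℝ) 1, (Fc i t - Hc t) ^ 2 := by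
    rw [← MeasureTheory.integral_finset_sum _ (fun i _ => hsqG i),
        ← MeasureTheory.integral_finset_sum _ (fun i _ => hsqH i)]
    refine integral_mono (integrable_finset_sum _ (fun i _ => hsqG i))
      (integrable_finset_sum _ (fun i _ => hsqH i)) ?_
    intro t
    simp only
    have := sum_sq_mean_le_aux m (fun i => Fc i t) (Hc t)
    rw [hGc_eq t]
    exact this
  -- combine
  calc ∑ i : Fin m,
        (lam₁ * (μF i - μg) ^ 2 +
          lam₂ * ∫ t in Set.Ioo (0:ℝ) 1, (Fc i t - Gc t) ^ 2)
      = lam₁ * ∑ i : Fin m, (μF i - μg) ^ 2 +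
          lam₂ * ∑ i : Fin m, ∫ t in Set.Ioo (0:ℝ) 1, (Fc i t - Gc t) ^ 2 := by
        rw [Finset.sum_add_distrib, Finset.mul_sum, Finset.mul_sum]
    _ ≤ lam₁ * ∑ i : Fin m, (μF i - μh) ^ 2 +
          lam₂ * ∑ i : Fin m, ∫ t in Set.Ioo (0:ℝ) 1, (Fc i t - Hc t) ^ 2 := by
        exact add_le_add (mul_le_mul_of_nonneg_left hmean hlam₁.le)
          (mul_le_mul_of_nonneg_left hdisp hlam₂.le)
    _ = ∑ i : Fin m,
        (lam₁ * (μF i - μh) ^ 2 +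
          lam₂ * ∫ t in Set.Ioo (0:ℝ) 1, (Fc i t - Hc t) ^ 2) := by
        rw [Finset.sum_add_distrib, Finset.mul_sum, Finset.mul_sum]
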